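/- Let β ≥ 0, let ℓ = [x̲, x̄] ⊂ ℝ be a bounded segment, and let g : ℓ → [0,∞) be an integrable β-log-concave function with ∫_ℓ g > 0, sandwiched by a log-concave function h on ℓ with e^{−β} h(x) ≤ g(x) ≤ h(x) for all x ∈ ℓ. Let p ∈ ℓ satisfy g(p) ≥ e^{−3β} sup_{z∈ℓ} g(z), let ε̃ ∈ (0, e^{−2β}/2), and let e_{−1} ≤ p ≤ e_1 be points of ℓ such that: either e_{−1} = x̲ and g(x̲) ≥ (1/2)e^{−β} ε̃ g(p), or (1/2)e^{−β} ε̃ g(p) ≤ g(e_{−1}) ≤ ε̃ g(p); and symmetrically either e_1 = x̄ and g(x̄) ≥ (1/2)e^{−β} ε̃ g(p), or (1/2)e^{−β} ε̃ g(p) ≤ g(e_1) ≤ ε̃ g(p). Then the total variation distance between π_{g,ℓ} (the probability measure on ℓ with density proportional to g) and its conditioning to the interval [e_{−1}, e_1] satisfies d_tv(π_{g,ℓ}, π_{g,ℓ}(· | [e_{−1}, e_1])) ≤ 3 e^{2β} ε̃. -/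

import Mathlib

open MeasureTheory

/-- Total variation distance between two measures:
`d_tv(μ, ν) = sup_B |μ(B) − ν(B)|` over measurable sets `B`. -/
noncomputable def tvDist {X : Type*} [MeasurableSpace X] (μ ν : Measure X) : ℝ :=
  ⨆ s : {s : Set X // MeasurableSet s}, |(μ s).toReal - (ν s).toReal|


lemma tail_le_aux (xlo xhi β ε : ℝ) (hβ : 0 ≤ β) (g : ℝ → ℝ)
    (hg0 : ∀ x ∈ Set.Icc xlo xhi, 0 ≤ g x)
    (hgβ : ∀ x ∈ Set.Icc xlo xhi, ∀ y ∈ Set.Icc xlo xhi, ∀ α : ℝ, α ∈ Set.Icc (0:ℝ) 1 →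
      Real.exp (-β) * (g x ^ α * g y ^ (1 - α)) ≤ g (α * x + (1 - α) * y))
    (hgint : ∀ a ∈ Set.Icc xlo xhi, ∀ b ∈ Set.Icc xlo xhi, IntervalIntegrable g volume a b)
    (p e1 : ℝ) (hp : p ∈ Set.Icc xlo xhi) (he1 : e1 ∈ Set.Icc xlo xhi) (hpe1 : p ≤ e1)
    (hgp : 0 < g p) (hε0 : 0 < ε) (hρ : Real.exp (2*β) * ε < 1/2)
    (hge1 : g e1 ≤ ε * g p) :
    ∫ t in e1..xhi, g t ≤ 2 * (Real.exp (2*β) * ε) * ∫ t in p..e1, g t := by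
  set ρ : ℝ := Real.exp (2*β) * ε with hρdef
  have hexp1 : (1:ℝ) ≤ Real.exp (2*β) := Real.one_le_exp (by linarith)
  have hρ0 : 0 < ρ := mul_pos (Real.exp_pos _) hε0
  have hεhalf : ε < 1/2 := by nlinarith
  have hppos : p < e1 := by
    rcases hpe1.lt_or_eq with h | h
    · exact h
    · exfalso; rw [← h] at hge1; nlinarith
  set d : ℝ := e1 - p with hddef
  have hd0 : 0 < d := by simp [hddef]; linarith
  have hIR0 : 0 ≤ ∫ t in p..e1, g t :=
    intervalIntegral.integral_nonneg hpe1 (fun x hx => hg0 x ⟨le_trans hp.1 hx.1, le_trans hx.2 he1.2⟩)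
  -- pointwise bound on [e1, xhi]
  have hpt : ∀ t ∈ Set.Icc e1 xhi, g t ≤ ρ * g (t - d) := by
    intro t ht
    have htl : Set.Icc e1 xhi ⊆ Set.Icc xlo xhi := Set.Icc_subset_Icc he1.1 le_rfl
    have htm : t ∈ Set.Icc xlo xhi := htl ht
    have htdm : t - d ∈ Set.Icc xlo xhi := by
      constructor
      · have : p ≤ t - d := by simp [hddef]; linarith [ht.1]
        linarith [hp.1]
      · linarith [htm.2, hd0.le]
    have htp : 0 < t - p := by linarith [ht.1]
    set α : ℝ := (t - e1)/(t - p) with hαdef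
    have hα0 : 0 ≤ α := div_nonneg (by linarith [ht.1]) htp.le
    have hα1 : α ≤ 1 := by
      rw [hαdef, div_le_one htp]; linarith
    have hx1 : α * p + (1 - α) * t = e1 := by
      have hmul : α * (t - p) = t - e1 := by rw [hαdef]; exact div_mul_cancel₀ _ htp.ne'
      linarith
    have hx2 : (1 - α) * p + (1 - (1 - α)) * t = t - d := by
      have hmul : α * (t - p) = t - e1 := by rw [hαdef]; exact div_mul_cancel₀ _ htp.ne'
      linarith [hddef]
    have h1 := hgβ p hp t htm α ⟨hα0, hα1⟩
    rw [hx1] at h1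
    have h2 := hgβ p hp t htm (1 - α) ⟨by linarith, by linarith⟩
    rw [hx2] at h2
    rcases (hg0 t htm).lt_or_eq with hgt | hgt
    · -- g t > 0
      have hA : g p ^ α * g p ^ (1 - α) = g p := by
        rw [← Real.rpow_add hgp]; norm_num
      have hB : g t ^ (1 - α) * g t ^ α = g t := by
        rw [← Real.rpow_add hgt]; norm_num
      have hnn1 : 0 ≤ g p ^ α * g t ^ (1 - α) :=
        mul_nonneg (Real.rpow_nonneg hgp.le _) (Real.rpow_nonneg hgt.le _)
      have hnn2 : 0 ≤ g p ^ (1 - α) * g t ^ (1 - (1 - α)) :=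
        mul_nonneg (Real.rpow_nonneg hgp.le _) (Real.rpow_nonneg hgt.le _)
      have hemul : Real.exp (-β) * Real.exp (-β) = Real.exp (-(2*β)) := by
        rw [← Real.exp_add]; ring_nf
    -- multiply h1 and h2
      have h3 : (Real.exp (-β) * (g p ^ α * g t ^ (1 - α))) *
          (Real.exp (-β) * (g p ^ (1 - α) * g t ^ (1 - (1 - α)))) ≤ g e1 * g (t - d) := by
        apply mul_le_mul h1 h2 (by positivity) (hg0 e1 he1)
      have h4 : Real.exp (-(2*β)) * (g p * g t) ≤ g e1 * g (t - d) := by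
        calc Real.exp (-(2*β)) * (g p * g t)
            = (Real.exp (-β) * (g p ^ α * g t ^ (1 - α))) *
              (Real.exp (-β) * (g p ^ (1 - α) * g t ^ (1 - (1 - α)))) := by
              rw [show (1 - (1 - α)) = α by ring]
              rw [← hemul]
              rw [show g p * g t = (g p ^ α * g p ^ (1-α)) * (g t ^ (1-α) * g t ^ α) by
                rw [hA, hB]]
              ring
          _ ≤ g e1 * g (t - d) := h3
      have h5 : g e1 * g (t - d) ≤ ε * g p * g (t - d) :=
        mul_le_mul_of_nonneg_right hge1 (hg0 _ htdm)
      have hexpinv : Real.exp (-(2*β)) * Real.exp (2*β) = 1 := by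
        rw [← Real.exp_add]; norm_num
      have hid : Real.exp (2*β) * Real.exp (-(2*β)) = 1 := by
        rw [← Real.exp_add]; norm_num
      have hmul := mul_le_mul_of_nonneg_left (le_trans h4 h5) (Real.exp_pos (2*β)).le
      have h6 : g p * g t ≤ g p * (ρ * g (t - d)) := by
        calc g p * g t = Real.exp (2*β) * (Real.exp (-(2*β)) * (g p * g t)) := by
              rw [← mul_assoc, hid, one_mul]
          _ ≤ Real.exp (2*β) * (ε * g p * g (t - d)) := hmul
          _ = g p * (ρ * g (t - d)) := by rw [hρdef]; ring
      exact le_of_mul_le_mul_left h6 hgp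
    · -- g t = 0
      rw [← hgt]
      exact mul_nonneg hρ0.le (hg0 _ htdm)
  -- integrability facts
  have hxhid : xhi - d ∈ Set.Icc xlo xhi := by
    constructor
    · have : p ≤ xhi - d := by simp [hddef]; linarith [he1.2]
      linarith [hp.1]
    · linarith [hd0.le, hp.2, he1.2]
  have hint1 : IntervalIntegrable g volume e1 xhi := hgint e1 he1 xhi ⟨le_trans hp.1 hp.2, le_rfl⟩
  have hint2 : IntervalIntegrable g volume p e1 := hgint p hp e1 he1
  have hint3 : IntervalIntegrable g volume e1 (xhi - d) := hgint e1 he1 _ hxhid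
  have hint4 : IntervalIntegrable g volume (xhi - d) xhi := hgint _ hxhid xhi ⟨le_trans hp.1 hp.2, le_rfl⟩
  have hints : IntervalIntegrable (fun t => g (t - d)) volume e1 xhi := by
    have := (hgint p hp (xhi - d) hxhid).comp_sub_right d
    simpa [hddef] using this
  have he1xhi : e1 ≤ xhi := he1.2
  -- main comparison
  have step1 : ∫ t in e1..xhi, g t ≤ ∫ t in e1..xhi, ρ * g (t - d) := by
    apply intervalIntegral.integral_mono_on he1xhi hint1 (hints.const_mul ρ)
    exact hpt
  have step2 : ∫ t in e1..xhi, ρ * g (t - d) = ρ * ∫ t in p..(xhi - d), g t := by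
    rw [intervalIntegral.integral_const_mul, intervalIntegral.integral_comp_sub_right g d,
      show e1 - d = p by rw [hddef]; ring]
  have step3 : ∫ t in p..(xhi - d), g t = (∫ t in p..e1, g t) + ∫ t in e1..(xhi - d), g t :=
    (intervalIntegral.integral_add_adjacent_intervals hint2 hint3).symm
  have step4 : ∫ t in e1..(xhi - d), g t ≤ ∫ t in e1..xhi, g t := by
    have hadd : (∫ t in e1..(xhi - d), g t) + ∫ t in (xhi - d)..xhi, g t = ∫ t in e1..xhi, g t :=
      intervalIntegral.integral_add_adjacent_intervals hint3 hint4
    have hnn : 0 ≤ ∫ t in (xhi - d)..xhi, g t :=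
      intervalIntegral.integral_nonneg (by linarith [hd0.le]) (fun x hx =>
        hg0 x ⟨le_trans hxhid.1 hx.1, hx.2⟩)
    linarith
  have hJ0 : 0 ≤ ∫ t in e1..xhi, g t :=
    intervalIntegral.integral_nonneg he1xhi (fun x hx => hg0 x ⟨le_trans he1.1 hx.1, hx.2⟩)
  nlinarith [step1, step2, step3, step4, hJ0, hIR0, hρ0]

set_option maxHeartbeats 1000000 in
/-- For a `β`-log-concave function `g` on a bounded segment
`ℓ = [x̲, x̄]`, sandwiched by a log-concave `h` with `e^{−β} h ≤ g ≤ h` on `ℓ`, a point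
`p ∈ ℓ` with `g(p) ≥ e^{−3β} sup_ℓ g`, an accuracy `ε̃ ∈ (0, e^{−2β}/2)` and points
`em ≤ p ≤ e1` of `ℓ` chosen as in the unidimensional rejection sampler, the total
variation distance between `π_{g,ℓ}` and its conditioning to `[em, e1]` is at most
`3 e^{2β} ε̃`. -/
theorem tvDist_truncation_of_unidimensional_sampler
    (β xlo xhi : ℝ) (hβ : 0 ≤ β) (g h : ℝ → ℝ)
    (hg0 : ∀ x ∈ Set.Icc xlo xhi, 0 ≤ g x)
    (hgβ : ∀ x ∈ Set.Icc xlo xhi, ∀ y ∈ Set.Icc xlo xhi, ∀ α : ℝ, α ∈ Set.Icc (0:ℝ) 1 →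
      Real.exp (-β) * (g x ^ α * g y ^ (1 - α)) ≤ g (α * x + (1 - α) * y))
    (hgint : IntegrableOn g (Set.Icc xlo xhi))
    (hgpos : 0 < ∫ x in Set.Icc xlo xhi, g x)
    (hh0 : ∀ x ∈ Set.Icc xlo xhi, 0 ≤ h x)
    (hhlogconc : ∀ x ∈ Set.Icc xlo xhi, ∀ y ∈ Set.Icc xlo xhi, ∀ α : ℝ, α ∈ Set.Icc (0:ℝ) 1 →
      h x ^ α * h y ^ (1 - α) ≤ h (α * x + (1 - α) * y))
    (hsand : ∀ x ∈ Set.Icc xlo xhi, Real.exp (-β) * h x ≤ g x ∧ g x ≤ h x)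
    (p : ℝ) (hp : p ∈ Set.Icc xlo xhi)
    (hpmax : ∀ z ∈ Set.Icc xlo xhi, Real.exp (-3 * β) * g z ≤ g p)
    (ε : ℝ) (hε0 : 0 < ε) (hε1 : ε < Real.exp (-2 * β) / 2)
    (em e1 : ℝ) (hem : em ∈ Set.Icc xlo xhi) (he1 : e1 ∈ Set.Icc xlo xhi)
    (hpem : em ≤ p) (hpe1 : p ≤ e1)
    (hcm : (em = xlo ∧ (1/2) * Real.exp (-β) * ε * g p ≤ g xlo) ∨
           ((1/2) * Real.exp (-β) * ε * g p ≤ g em ∧ g em ≤ ε * g p))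
    (hc1 : (e1 = xhi ∧ (1/2) * Real.exp (-β) * ε * g p ≤ g xhi) ∨
           ((1/2) * Real.exp (-β) * ε * g p ≤ g e1 ∧ g e1 ≤ ε * g p)) :
    tvDist
      ((ENNReal.ofReal (∫ x in Set.Icc xlo xhi, g x))⁻¹ •
        ((volume.restrict (Set.Icc xlo xhi)).withDensity fun x => ENNReal.ofReal (g x)))
      (ProbabilityTheory.cond
        ((ENNReal.ofReal (∫ x in Set.Icc xlo xhi, g x))⁻¹ •
          ((volume.restrict (Set.Icc xlo xhi)).withDensity fun x => ENNReal.ofReal (g x)))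
        (Set.Icc em e1))
      ≤ 3 * Real.exp (2 * β) * ε := by
  classical
  have hxx : xlo ≤ xhi := le_trans hp.1 hp.2
  -- g p > 0
  have hgp : 0 < g p := by
    rcases (hg0 p hp).lt_or_eq with hh | hh
    · exact hh
    · exfalso
      have hz : ∀ x ∈ Set.Icc xlo xhi, g x = 0 := by
        intro x hx
        have := hpmax x hx
        have := hg0 x hx
        nlinarith [Real.exp_pos (-3 * β)]
      have : ∫ x in Set.Icc xlo xhi, g x = 0 := by
        rw [setIntegral_congr_fun measurableSet_Icc hz, integral_zero]
      linarith
  set ρ : ℝ := Real.exp (2*β) * ε with hρdef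
  have hexp1 : (1:ℝ) ≤ Real.exp (2*β) := Real.one_le_exp (by linarith)
  have hρ0 : 0 < ρ := mul_pos (Real.exp_pos _) hε0
  have hρhalf : ρ < 1/2 := by
    have hkey : Real.exp (2*β) * Real.exp (-2*β) = 1 := by
      rw [← Real.exp_add]; norm_num
    have := mul_lt_mul_of_pos_left hε1 (Real.exp_pos (2*β))
    nlinarith [Real.exp_pos (2*β)]
  have hgint' : ∀ a ∈ Set.Icc xlo xhi, ∀ b ∈ Set.Icc xlo xhi, IntervalIntegrable g volume a b := by
    intro a ha b hb
    rw [intervalIntegrable_iff]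
    refine hgint.mono_set (subset_trans Set.Ioc_subset_Icc_self ?_)
    exact Set.uIcc_subset_Icc ha hb
  have hIR0 : 0 ≤ ∫ t in p..e1, g t :=
    intervalIntegral.integral_nonneg hpe1
      (fun x hx => hg0 x ⟨le_trans hp.1 hx.1, le_trans hx.2 he1.2⟩)
  have hIL0 : 0 ≤ ∫ t in em..p, g t :=
    intervalIntegral.integral_nonneg hpem
      (fun x hx => hg0 x ⟨le_trans hem.1 hx.1, le_trans hx.2 hp.2⟩)
  -- right tail
  have hR : ∫ t in e1..xhi, g t ≤ 2 * ρ * ∫ t in p..e1, g t := by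
    rcases hc1 with ⟨hee, _⟩ | ⟨_, h2⟩
    · have hz : (∫ t in e1..xhi, g t) = 0 := by rw [hee]; exact intervalIntegral.integral_same
      rw [hz]; exact mul_nonneg (by positivity) hIR0
    · exact tail_le_aux xlo xhi β ε hβ g hg0 hgβ hgint' p e1 hp he1 hpe1 hgp hε0 hρhalf h2
  -- left tail via reflection
  have hL : ∫ t in xlo..em, g t ≤ 2 * ρ * ∫ t in em..p, g t := by
    rcases hcm with ⟨hee, _⟩ | ⟨_, h2⟩
    · have hz : (∫ t in xlo..em, g t) = 0 := by rw [hee]; exact intervalIntegral.integral_same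
      rw [hz]; exact mul_nonneg (by positivity) hIL0
    · set c : ℝ := xlo + xhi with hcdef
      set G : ℝ → ℝ := fun x => g (c - x) with hGdef
      have hmem : ∀ x ∈ Set.Icc xlo xhi, c - x ∈ Set.Icc xlo xhi := by
        intro x hx; exact ⟨by simp [hcdef]; linarith [hx.2], by simp [hcdef]; linarith [hx.1]⟩
      have hG0 : ∀ x ∈ Set.Icc xlo xhi, 0 ≤ G x := fun x hx => hg0 _ (hmem x hx)
      have hGβ : ∀ x ∈ Set.Icc xlo xhi, ∀ y ∈ Set.Icc xlo xhi, ∀ α : ℝ, α ∈ Set.Icc (0:ℝ) 1 →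
          Real.exp (-β) * (G x ^ α * G y ^ (1 - α)) ≤ G (α * x + (1 - α) * y) := by
        intro x hx y hy α hα
        have : c - (α * x + (1 - α) * y) = α * (c - x) + (1 - α) * (c - y) := by ring
        simpa [hGdef, this] using hgβ (c - x) (hmem x hx) (c - y) (hmem y hy) α hα
      have hGint : ∀ a ∈ Set.Icc xlo xhi, ∀ b ∈ Set.Icc xlo xhi,
          IntervalIntegrable G volume a b := by
        intro a ha b hb
        have := (hgint' (c - a) (hmem a ha) (c - b) (hmem b hb)).comp_sub_left c
        simpa [hGdef] using this
      have hGp : G (c - p) = g p := by simp [hGdef]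
      have hGem : G (c - em) = g em := by simp [hGdef]
      have key := tail_le_aux xlo xhi β ε hβ G hG0 hGβ hGint (c - p) (c - em)
        (hmem p hp) (hmem em hem) (by linarith) (by rw [hGp]; exact hgp) hε0 hρhalf
        (by rw [hGem, hGp]; exact h2)
      have e1' : ∫ t in (c - em)..xhi, G t = ∫ t in xlo..em, g t := by
        simp only [hGdef]
        rw [intervalIntegral.integral_comp_sub_left g c,
          show c - xhi = xlo by rw [hcdef]; ring, show c - (c - em) = em by ring]
      have e2' : ∫ t in (c - p)..(c - em), G t = ∫ t in em..p, g t := by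
        simp only [hGdef]
        rw [intervalIntegral.integral_comp_sub_left g c,
          show c - (c - em) = em by ring, show c - (c - p) = p by ring]
      rw [e1', e2'] at key
      exact key
  -- totals
  set T : ℝ := ∫ x in Set.Icc xlo xhi, g x with hTdef
  set A : Set ℝ := Set.Icc em e1 with hAdef
  have hAsub : A ⊆ Set.Icc xlo xhi := Set.Icc_subset_Icc hem.1 he1.2
  have heme1 : em ≤ e1 := le_trans hpem hpe1
  set IA : ℝ := ∫ x in A, g x with hIAdef
  have hIA_eq : IA = (∫ t in em..p, g t) + ∫ t in p..e1, g t := by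
    rw [hIAdef, hAdef, MeasureTheory.integral_Icc_eq_integral_Ioc,
      ← intervalIntegral.integral_of_le heme1,
      ← intervalIntegral.integral_add_adjacent_intervals (hgint' em hem p hp) (hgint' p hp e1 he1)]
  have hT_eq : T = (∫ t in xlo..em, g t) + IA + ∫ t in e1..xhi, g t := by
    rw [hTdef, MeasureTheory.integral_Icc_eq_integral_Ioc, ← intervalIntegral.integral_of_le hxx,
      ← intervalIntegral.integral_add_adjacent_intervals (hgint' xlo ⟨le_rfl, hxx⟩ em hem)
        (hgint' em hem xhi ⟨hxx, le_rfl⟩),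
      ← intervalIntegral.integral_add_adjacent_intervals (hgint' em hem e1 he1)
        (hgint' e1 he1 xhi ⟨hxx, le_rfl⟩)]
    have : IA = ∫ t in em..e1, g t := by
      rw [hIAdef, hAdef, MeasureTheory.integral_Icc_eq_integral_Ioc,
        ← intervalIntegral.integral_of_le heme1]
    rw [this]; ring
  have hTail : T - IA ≤ 2 * ρ * IA := by
    rw [hT_eq, hIA_eq]; nlinarith [hL, hR]
  have hIA_pos : 0 < IA := by nlinarith
  have hJL0 : 0 ≤ ∫ t in xlo..em, g t :=
    intervalIntegral.integral_nonneg hem.1 (fun x hx => hg0 x ⟨hx.1, le_trans hx.2 hem.2⟩)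
  have hJR0 : 0 ≤ ∫ t in e1..xhi, g t :=
    intervalIntegral.integral_nonneg he1.2 (fun x hx => hg0 x ⟨le_trans he1.1 hx.1, hx.2⟩)
  have hIA_le : IA ≤ T := by rw [hT_eq]; linarith
  -- measure bookkeeping
  set ν : Measure ℝ := (volume.restrict (Set.Icc xlo xhi)).withDensity
    (fun x => ENNReal.ofReal (g x)) with hνdef
  set μ : Measure ℝ := (ENNReal.ofReal T)⁻¹ • ν with hμdef
  clear_value ρ T A IA ν μ
  have hae : ∀ u : Set ℝ, MeasurableSet u → u ⊆ Set.Icc xlo xhi →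
      0 ≤ᵐ[volume.restrict u] g := fun u hu hsu =>
    (ae_restrict_iff' hu).mpr (Filter.Eventually.of_forall fun x hx => hg0 x (hsu hx))
  have hval : ∀ s : Set ℝ, MeasurableSet s →
      μ s = (ENNReal.ofReal T)⁻¹ *
        ENNReal.ofReal (∫ x in s ∩ Set.Icc xlo xhi, g x) := by
    intro s hs
    rw [hμdef, Measure.smul_apply, smul_eq_mul, hνdef, withDensity_apply _ hs]
    congr 1
    rw [Measure.restrict_restrict hs,
      ← ofReal_integral_eq_lintegral_ofReal (hgint.mono_set Set.inter_subset_right)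
        (hae _ (hs.inter measurableSet_Icc) Set.inter_subset_right)]
  have htoReal : ∀ s : Set ℝ, MeasurableSet s →
      (μ s).toReal = (∫ x in s ∩ Set.Icc xlo xhi, g x) / T := by
    intro s hs
    rw [hval s hs, ENNReal.toReal_mul, ENNReal.toReal_inv, ENNReal.toReal_ofReal hgpos.le,
      ENNReal.toReal_ofReal
        (setIntegral_nonneg (hs.inter measurableSet_Icc) fun x hx => hg0 x hx.2)]
    rw [inv_mul_eq_div]
  have hAmeas : MeasurableSet A := hAdef ▸ measurableSet_Icc
  have hμA : (μ A).toReal = IA / T := by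
    rw [htoReal A hAmeas, Set.inter_eq_left.mpr hAsub, ← hIAdef]
  -- the bound
  show tvDist μ (ProbabilityTheory.cond μ A) ≤ 3 * Real.exp (2 * β) * ε
  have hbnd : 3 * Real.exp (2 * β) * ε = 3 * ρ := by rw [hρdef]; ring
  rw [tvDist, hbnd]
  apply Real.iSup_le _ (by positivity)
  rintro ⟨s, hs⟩
  have hcond : (ProbabilityTheory.cond μ A) s = (μ A)⁻¹ * μ (A ∩ s) :=
    ProbabilityTheory.cond_apply hAmeas μ s
  set m : ℝ := ∫ x in A ∩ s, g x with hmdef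
  set a : ℝ := ∫ x in s ∩ Set.Icc xlo xhi, g x with hadef
  clear_value m a
  have hμs : (μ s).toReal = a / T := by rw [hadef]; exact htoReal s hs
  have hAsint : (A ∩ s) ∩ Set.Icc xlo xhi = A ∩ s := by
    rw [Set.inter_eq_left]; exact fun x hx => hAsub hx.1
  have hcondval : ((ProbabilityTheory.cond μ A) s).toReal = (IA / T)⁻¹ * (m / T) := by
    rw [hcond, ENNReal.toReal_mul, ENNReal.toReal_inv, hμA,
      htoReal (A ∩ s) (hAmeas.inter hs), hAsint, ← hmdef]
  have hTne : T ≠ 0 := ne_of_gt hgpos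
  have hIAne : IA ≠ 0 := ne_of_gt hIA_pos
  have hcondval' : ((ProbabilityTheory.cond μ A) s).toReal = m / IA := by
    rw [hcondval]; field_simp
  -- real inequalities
  have hm0 : 0 ≤ m := by
    rw [hmdef]
    exact setIntegral_nonneg (hAmeas.inter hs) fun x hx => hg0 x (hAsub hx.1)
  have hmIA : m ≤ IA := by
    rw [hmdef, hIAdef]
    exact setIntegral_mono_set (hgint.mono_set hAsub) (hae _ hAmeas hAsub)
      (HasSubset.Subset.eventuallyLE Set.inter_subset_left)
  have ham : m ≤ a := by
    rw [hmdef, hadef]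
    apply setIntegral_mono_set (hgint.mono_set Set.inter_subset_right)
      (hae _ (hs.inter measurableSet_Icc) Set.inter_subset_right)
    apply HasSubset.Subset.eventuallyLE
    exact fun x hx => ⟨hx.2, hAsub hx.1⟩
  have hsub : a ≤ m + (T - IA) := by
    have h1 : (∫ x in (s ∩ Set.Icc xlo xhi) ∩ A, g x)
        + ∫ x in (s ∩ Set.Icc xlo xhi) \ A, g x = a := by
      rw [hadef]
      exact integral_inter_add_diff hAmeas (hgint.mono_set Set.inter_subset_right)
    have h2 : (∫ x in Set.Icc xlo xhi ∩ A, g x) + ∫ x in Set.Icc xlo xhi \ A, g x = T := by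
      rw [hTdef]
      exact integral_inter_add_diff hAmeas hgint
    have hsetEq : (s ∩ Set.Icc xlo xhi) ∩ A = A ∩ s := by
      ext x; constructor
      · rintro ⟨⟨hx1, _⟩, hx3⟩; exact ⟨hx3, hx1⟩
      · rintro ⟨hx1, hx2⟩; exact ⟨⟨hx2, hAsub hx1⟩, hx1⟩
    have hsetEq2 : Set.Icc xlo xhi ∩ A = A := Set.inter_eq_right.mpr hAsub
    rw [hsetEq] at h1
    rw [hsetEq2] at h2
    have h3 : (∫ x in (s ∩ Set.Icc xlo xhi) \ A, g x) ≤ ∫ x in Set.Icc xlo xhi \ A, g x := by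
      apply setIntegral_mono_set (hgint.mono_set Set.diff_subset)
        (hae _ (measurableSet_Icc.diff hAmeas) Set.diff_subset)
      exact HasSubset.Subset.eventuallyLE (fun x hx => ⟨hx.1.2, hx.2⟩)
    rw [← hmdef] at h1
    rw [← hIAdef] at h2
    linarith
  rw [hμs, hcondval']
  rw [abs_sub_le_iff]
  constructor
  · rw [div_sub_div _ _ hTne hIAne, div_le_iff₀ (mul_pos hgpos hIA_pos)]
    have f1 : a * IA ≤ (m + (T - IA)) * IA := mul_le_mul_of_nonneg_right hsub hIA_pos.le
    have f2 : m * IA ≤ m * T := mul_le_mul_of_nonneg_left hIA_le hm0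
    have f3 : (T - IA) * IA ≤ (2 * ρ * IA) * IA := mul_le_mul_of_nonneg_right hTail hIA_pos.le
    have f4 : (2 * ρ * IA) * IA ≤ (2 * ρ * IA) * T :=
      mul_le_mul_of_nonneg_left hIA_le
        (mul_nonneg (mul_nonneg (by norm_num) hρ0.le) hIA_pos.le)
    have f5 : 0 ≤ ρ * (T * IA) := mul_nonneg hρ0.le (mul_nonneg hgpos.le hIA_pos.le)
    nlinarith [f1, f2, f3, f4, f5]
  · rw [div_sub_div _ _ hIAne hTne, div_le_iff₀ (mul_pos hIA_pos hgpos)]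
    have g1 : IA * m ≤ IA * a := mul_le_mul_of_nonneg_left ham hIA_pos.le
    have g2 : m * (T - IA) ≤ IA * (T - IA) :=
      mul_le_mul_of_nonneg_right hmIA (by linarith)
    have g3 : IA * (T - IA) ≤ IA * (2 * ρ * IA) := mul_le_mul_of_nonneg_left hTail hIA_pos.le
    have g4 : (2 * ρ * IA) * IA ≤ (2 * ρ * IA) * T :=
      mul_le_mul_of_nonneg_left hIA_le
        (mul_nonneg (mul_nonneg (by norm_num) hρ0.le) hIA_pos.le)
    have g5 : 0 ≤ ρ * (IA * T) := mul_nonneg hρ0.le (mul_nonneg hIA_pos.le hgpos.le)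
    nlinarith [g1, g2, g3, g4, g5]
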